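/- For H ∈ (0,1/2) and T > 0, the function 𝒦_H(u) = 1_{u≤0} [ (−u)^{2H−1} − (2/T) ∫_u^0 e^{2s/T}(s−u)^{2H−1} ds ] satisfies 𝒦_H(u) / (−u)^{2H−2} → (T/2)(2H−1) as u → −∞. -/

import Mathlib

open MeasureTheory Real Filter Set Topology intervalIntegral


variable {p T : ℝ}

lemma ii_rpow_sub (hp1 : -1 < p) (x a b : ℝ) :
    IntervalIntegrable (fun r => (x - r) ^ p) volume a b := by
  have h := (intervalIntegrable_rpow' (a := x - a) (b := x - b) hp1).comp_sub_left x
  simpa using h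

lemma ii_exp_rpow (hp1 : -1 < p) (T x a b : ℝ) :
    IntervalIntegrable (fun r => Real.exp (2 * -r / T) * (x - r) ^ p) volume a b := by
  apply IntervalIntegrable.continuousOn_mul (ii_rpow_sub hp1 x a b)
  exact (Real.continuous_exp.comp (by continuity)).continuousOn

lemma ii_g (hp1 : -1 < p) (T x a b : ℝ) :
    IntervalIntegrable
      (fun r => Real.exp (2 * -r / T) * ((x ^ p - (x - r) ^ p) * x ^ (1 - p))) volume a b := by
  apply IntervalIntegrable.continuousOn_mul
  · exact (intervalIntegrable_const.sub (ii_rpow_sub hp1 x a b)).mul_const _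
  · exact (Real.continuous_exp.comp (by continuity)).continuousOn

lemma rpow_sub_bound (hp0 : p < 0) {a b : ℝ} (ha : 0 < a) (hab : a ≤ b) :
    |b ^ p - a ^ p| ≤ (-p) * a ^ (p - 1) * (b - a) := by
  have hderiv : ∀ t ∈ Icc a b, HasDerivWithinAt (fun t : ℝ => t ^ p) (p * t ^ (p - 1)) (Icc a b) t :=
    fun t ht => (Real.hasDerivAt_rpow_const (Or.inl (lt_of_lt_of_le ha ht.1).ne')).hasDerivWithinAt
  have hbd : ∀ t ∈ Icc a b, ‖p * t ^ (p - 1)‖ ≤ (-p) * a ^ (p - 1) := by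
    intro t ht
    rw [norm_mul, Real.norm_eq_abs, Real.norm_eq_abs, abs_of_neg hp0,
      abs_of_nonneg (Real.rpow_nonneg (le_trans ha.le ht.1) _)]
    exact mul_le_mul_of_nonneg_left
      (Real.rpow_le_rpow_of_nonpos ha ht.1 (by linarith)) (by linarith)
  have := (convex_Icc a b).norm_image_sub_le_of_norm_hasDerivWithin_le hderiv hbd
    (left_mem_Icc.2 hab) (right_mem_Icc.2 hab)
  calc |b ^ p - a ^ p| ≤ (-p) * a ^ (p-1) * ‖b - a‖ := this
    _ = (-p) * a ^ (p - 1) * (b - a) := by rw [Real.norm_eq_abs, abs_of_nonneg (by linarith)]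

lemma psi_tendsto {p : ℝ} (hp0 : p < 0) {r : ℝ} (hr : 0 < r) :
    Tendsto (fun x : ℝ => (x ^ p - (x - r) ^ p) * x ^ (1 - p)) atTop (𝓝 (p * r)) := by
  have hf : HasDerivAt (fun y : ℝ => (1 - y) ^ p) (-p) 0 := by
    have h1 : HasDerivAt (fun y : ℝ => 1 - y) (-1) 0 := by
      simpa using (hasDerivAt_id (0:ℝ)).const_sub 1
    have h2 : HasDerivAt (fun t : ℝ => t ^ p) (p * (1:ℝ) ^ (p - 1))
        ((fun y : ℝ => 1 - y) 0) := by
      simpa using Real.hasDerivAt_rpow_const (p := p) (x := (1:ℝ)) (Or.inl one_ne_zero)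
    have h3 := h2.comp 0 h1
    simp only [Real.one_rpow, mul_one, mul_neg] at h3
    exact h3
  have hslope := hasDerivAt_iff_tendsto_slope.mp hf
  have hdiv : Tendsto (fun x : ℝ => r / x) atTop (𝓝[≠] (0:ℝ)) := by
    refine tendsto_nhdsWithin_of_tendsto_nhds_of_eventually_within _
      (tendsto_const_nhds.div_atTop tendsto_id) ?_
    filter_upwards [eventually_gt_atTop 0] with x hx
    exact (div_pos hr hx).ne'
  have hcomp : Tendsto (fun x : ℝ => -r * slope (fun y : ℝ => (1 - y) ^ p) 0 (r / x))
      atTop (𝓝 (p * r)) := by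
    have := tendsto_const_nhds (x := -r) (f := atTop (α := ℝ)) |>.mul (hslope.comp hdiv)
    have h : -r * -p = p * r := by ring
    simpa [h] using this
  refine Tendsto.congr' ?_ hcomp
  filter_upwards [eventually_gt_atTop (max r 0)] with x hx
  have hx0 : 0 < x := lt_of_le_of_lt (le_max_right r 0) hx
  have hrx : r < x := lt_of_le_of_lt (le_max_left r 0) hx
  have h1rx : 0 < 1 - r / x := by
    rw [sub_pos, div_lt_one hx0]; exact hrx
  have hsub : x - r = x * (1 - r / x) := by field_simp
  have hmul : (x - r) ^ p = x ^ p * (1 - r / x) ^ p := by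
    rw [hsub, Real.mul_rpow hx0.le h1rx.le]
  have hxp : x ^ p * x ^ (1 - p) = x := by
    rw [← Real.rpow_add hx0]; norm_num
  have hslope_eq : slope (fun y : ℝ => (1 - y) ^ p) 0 (r / x)
      = ((1 - r / x) ^ p - 1) / (r / x) := by
    simp [slope_def_field, Real.one_rpow]
  rw [hslope_eq]
  have hrx0 : r / x ≠ 0 := (div_pos hr hx0).ne'
  have hxne : x ≠ 0 := hx0.ne'
  rw [hmul]
  field_simp
  linear_combination (((x - r)/x) ^ p - 1) * hxp

lemma rpow_measurable {p : ℝ} : Measurable (fun t : ℝ => t ^ p) := by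
  apply measurable_of_continuousOn_compl_singleton (0:ℝ)
  exact ContinuousOn.rpow_const continuousOn_id (fun t ht => Or.inl (by simpa using ht))

lemma limit_integral {p T : ℝ} (hT : 0 < T) :
    ∫ r in Ioi (0:ℝ), Real.exp (2 * -r / T) * (p * r) = p * (T/2)^2 := by
  have h := Real.integral_rpow_mul_exp_neg_mul_Ioi (a := 2) (r := 2/T)
    (by norm_num) (div_pos two_pos hT)
  have heq : ∀ r : ℝ, Real.exp (2 * -r / T) * (p * r)
      = p * (r ^ ((2:ℝ) - 1) * Real.exp (-(2/T * r))) := by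
    intro r
    rw [show ((2:ℝ) - 1) = (1:ℝ) by norm_num, Real.rpow_one,
      show 2 * -r / T = -(2/T * r) by ring]
    ring
  simp_rw [heq]
  rw [MeasureTheory.integral_const_mul, h, Real.Gamma_two, one_div_div,
    show ((2:ℝ)) = ((2:ℕ):ℝ) by norm_num, Real.rpow_natCast]
  norm_num

lemma phi1 {p T : ℝ} (hp1 : -1 < p) (hp0 : p < 0) (hT : 0 < T) :
    Tendsto (fun x : ℝ => ∫ r in (0:ℝ)..(x/2),
        Real.exp (2 * -r / T) * ((x ^ p - (x - r) ^ p) * x ^ (1 - p))) atTop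
      (𝓝 (p * (T/2)^2)) := by
  set g : ℝ → ℝ → ℝ :=
    fun x r => Real.exp (2 * -r / T) * ((x ^ p - (x - r) ^ p) * x ^ (1 - p)) with hgdef
  have key : Tendsto (fun x : ℝ => ∫ r in Ioi (0:ℝ), (Ioc (0:ℝ) (x/2)).indicator (g x) r)
      atTop (𝓝 (∫ r in Ioi (0:ℝ), Real.exp (2 * -r / T) * (p * r))) := by
    apply MeasureTheory.tendsto_integral_filter_of_dominated_convergence
      (bound := fun r => Real.exp (2 * -r / T) * ((-p) * 2 ^ (1 - p) * r))
    · -- measurability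
      filter_upwards with x
      apply AEStronglyMeasurable.indicator _ measurableSet_Ioc
      apply Measurable.aestronglyMeasurable
      apply Measurable.mul
      · exact (Real.continuous_exp.comp (by continuity)).measurable
      · exact ((measurable_const.sub
          (rpow_measurable.comp (measurable_const.sub measurable_id))).mul measurable_const)
    · -- bound
      filter_upwards [eventually_gt_atTop (0:ℝ)] with x hx0
      filter_upwards [ae_restrict_mem measurableSet_Ioi] with r hr
      rcases le_or_gt r (x/2) with hrx | hrx
      · have hr0 : (0:ℝ) < r := hr
        rw [indicator_of_mem (show r ∈ Ioc 0 (x/2) from mem_Ioc.2 ⟨hr0, hrx⟩)]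
        have hxr : 0 < x - r := by
          have : x / 2 < x := by linarith
          linarith
        have hx2 : (0:ℝ) < x / 2 := by linarith
        have hb1 : |x ^ p - (x - r) ^ p| ≤ (-p) * (x/2) ^ (p - 1) * r := by
          have h1 := rpow_sub_bound hp0 hxr (by linarith : x - r ≤ x)
          have h2 : (x - r) ^ (p - 1) ≤ (x/2) ^ (p - 1) :=
            Real.rpow_le_rpow_of_nonpos hx2 (by linarith) (by linarith)
          calc |x ^ p - (x - r) ^ p|
              ≤ (-p) * (x - r) ^ (p-1) * (x - (x - r)) := h1
            _ = (-p) * (x - r) ^ (p-1) * r := by ring_nf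
            _ ≤ (-p) * (x/2) ^ (p - 1) * r := by
                apply mul_le_mul_of_nonneg_right _ hr0.le
                exact mul_le_mul_of_nonneg_left h2 (by linarith)
        have hkey : (x/2) ^ (p - 1) * x ^ (1 - p) = 2 ^ (1 - p) := by
          rw [Real.div_rpow hx0.le (by norm_num : (0:ℝ) ≤ 2), div_mul_eq_mul_div,
            ← Real.rpow_add hx0, show p - 1 + (1 - p) = 0 by ring, Real.rpow_zero,
            show (1:ℝ) - p = -(p-1) by ring, Real.rpow_neg (by norm_num : (0:ℝ) ≤ 2), one_div]
        have hfin : |x ^ p - (x - r) ^ p| * x ^ (1 - p) ≤ (-p) * 2 ^ (1 - p) * r := by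
          calc |x ^ p - (x - r) ^ p| * x ^ (1 - p)
              ≤ ((-p) * (x/2) ^ (p-1) * r) * x ^ (1-p) :=
                mul_le_mul_of_nonneg_right hb1 (Real.rpow_nonneg hx0.le _)
            _ = (-p) * ((x/2) ^ (p-1) * x ^ (1-p)) * r := by ring
            _ = (-p) * 2 ^ (1-p) * r := by rw [hkey]
        rw [hgdef]
        simp only [norm_mul, Real.norm_eq_abs, Real.abs_exp]
        rw [abs_of_nonneg (Real.rpow_nonneg hx0.le (1-p))]
        exact mul_le_mul_of_nonneg_left hfin (Real.exp_pos _).le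
      · rw [indicator_of_notMem (by simp [not_le.mpr hrx])]
        simp only [norm_zero]
        have hr0 : (0:ℝ) < r := hr
        have : (0:ℝ) ≤ (-p) * 2 ^ (1 - p) * r := by
          apply mul_nonneg (mul_nonneg (by linarith) (Real.rpow_nonneg (by norm_num) _)) hr0.le
        exact mul_nonneg (Real.exp_pos _).le this
    · -- bound integrable
      have h := integrableOn_rpow_mul_exp_neg_mul_rpow
        (s := 1) (p := 1) (b := 2/T) (by norm_num) one_pos (div_pos two_pos hT)
      have heq : (fun r : ℝ => Real.exp (2 * -r / T) * ((-p) * 2 ^ (1 - p) * r))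
          = fun r : ℝ => ((-p) * 2 ^ (1 - p)) * (r ^ (1:ℝ) * Real.exp (-(2/T) * r ^ (1:ℝ))) := by
        funext r
        rw [Real.rpow_one, show 2 * -r / T = -(2/T) * r by ring]
        ring
      rw [heq]
      exact (h.const_mul _)
    · -- pointwise limit
      filter_upwards [ae_restrict_mem measurableSet_Ioi] with r hr
      have hr0 : (0:ℝ) < r := hr
      have hev : (fun x : ℝ => g x r) =ᶠ[atTop]
          (fun x : ℝ => (Ioc (0:ℝ) (x/2)).indicator (g x) r) := by
        filter_upwards [eventually_ge_atTop (2*r)] with x hx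
        rw [indicator_of_mem (show r ∈ Ioc 0 (x/2) from mem_Ioc.2 ⟨hr0, by linarith⟩)]
      refine Tendsto.congr' hev ?_
      exact tendsto_const_nhds.mul (psi_tendsto hp0 hr0)
  rw [limit_integral hT] at key
  refine Tendsto.congr' ?_ key
  filter_upwards [eventually_ge_atTop (0:ℝ)] with x hx
  rw [MeasureTheory.integral_indicator measurableSet_Ioc,
    Measure.restrict_restrict measurableSet_Ioc,
    inter_eq_self_of_subset_left Ioc_subset_Ioi_self,
    intervalIntegral.integral_of_le (by linarith : (0:ℝ) ≤ x/2)]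

lemma Bfun_tendsto {p T : ℝ} (hp1 : -1 < p) (hT : 0 < T) :
    Tendsto (fun x : ℝ =>
      (x ^ p * (x - x/2) + (x/2) ^ (p+1) / (p+1)) * (Real.exp (-(x/T)) * x ^ (1-p)))
      atTop (𝓝 0) := by
  have hp10 : (0:ℝ) < p + 1 := by linarith
  have h0 : Tendsto (fun x : ℝ => (1/2 + (2:ℝ) ^ (-(p+1)) / (p+1)) *
      (x ^ (2:ℝ) * Real.exp (-(1/T) * x))) atTop (𝓝 0) := by
    have := (tendsto_rpow_mul_exp_neg_mul_atTop_nhds_zero 2 (1/T) (by positivity)).const_mul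
      (1/2 + (2:ℝ) ^ (-(p+1)) / (p+1))
    simpa using this
  refine Tendsto.congr' ?_ h0
  filter_upwards [eventually_gt_atTop (0:ℝ)] with x hx0
  have e1 : x ^ p * x ^ (1-p) = x := by
    rw [← Real.rpow_add hx0]; norm_num
  have e2 : x ^ (p+1) * x ^ (1-p) = x ^ (2:ℝ) := by
    rw [← Real.rpow_add hx0, show p + 1 + (1 - p) = (2:ℝ) by ring]
  have e3 : (x/2) ^ (p+1) = x ^ (p+1) * (2:ℝ) ^ (-(p+1)) := by
    rw [Real.div_rpow hx0.le (by norm_num : (0:ℝ) ≤ 2),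
      Real.rpow_neg (by norm_num : (0:ℝ) ≤ 2), div_eq_mul_inv]
  have e4 : x ^ (2:ℝ) = x * x := by
    rw [show (2:ℝ) = ((2:ℕ):ℝ) by norm_num, Real.rpow_natCast]; ring
  have e5 : Real.exp (-(1/T) * x) = Real.exp (-(x/T)) := by
    congr 1; ring
  rw [e5, e3, e4]
  have e2' : x ^ (p+1) * x ^ (1-p) = x * x := by rw [e2, e4]
  set E := Real.exp (-(x/T))
  linear_combination (-(E*(x/2)))*e1 - (E*(2:ℝ)^(-(p+1))/(p+1))*e2'

lemma phi2 {p T : ℝ} (hp1 : -1 < p) (hp0 : p < 0) (hT : 0 < T) :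
    Tendsto (fun x : ℝ => ∫ r in (x/2)..x,
        Real.exp (2 * -r / T) * ((x ^ p - (x - r) ^ p) * x ^ (1 - p))) atTop (𝓝 0) := by
  have hB := Bfun_tendsto (T := T) hp1 hT
  have hBabs : Tendsto (fun x : ℝ =>
      |(x ^ p * (x - x/2) + (x/2) ^ (p+1) / (p+1)) * (Real.exp (-(x/T)) * x ^ (1-p))|)
      atTop (𝓝 0) := by
    simpa using hB.abs
  apply squeeze_zero_norm' ?_ hBabs
  filter_upwards [eventually_gt_atTop (0:ℝ)] with x hx0
  have hle : x/2 ≤ x := by linarith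
  set bnd : ℝ → ℝ :=
    fun r => (x ^ p + (x - r) ^ p) * (Real.exp (-(x/T)) * x ^ (1-p)) with hbnd
  have hbint : IntervalIntegrable bnd volume (x/2) x :=
    (intervalIntegrable_const.add (ii_rpow_sub hp1 x _ _)).mul_const _
  have hub : ‖∫ r in (x/2)..x,
      Real.exp (2 * -r / T) * ((x ^ p - (x - r) ^ p) * x ^ (1 - p))‖
      ≤ |∫ r in (x/2)..x, bnd r| := by
    apply intervalIntegral.norm_integral_le_abs_of_norm_le _ hbint
    rw [uIoc_of_le hle]
    filter_upwards [ae_restrict_mem measurableSet_Ioc] with r hr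
    have hr1 : x/2 < r := hr.1
    have hr2 : r ≤ x := hr.2
    have hxr : 0 ≤ x - r := by linarith
    have hxp : (0:ℝ) ≤ x ^ p := Real.rpow_nonneg hx0.le _
    have hxrp : (0:ℝ) ≤ (x - r) ^ p := Real.rpow_nonneg hxr _
    rw [hbnd]
    simp only [norm_mul, Real.norm_eq_abs, Real.abs_exp]
    rw [abs_of_nonneg (Real.rpow_nonneg hx0.le (1-p)), mul_comm (Real.exp (-(x/T)))]
    rw [mul_comm (Real.exp (2 * -r / T)), mul_assoc]
    apply mul_le_mul
    · exact abs_le.2 ⟨by linarith, by linarith⟩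
    · apply mul_le_mul_of_nonneg_left _ (Real.rpow_nonneg hx0.le _)
      apply Real.exp_le_exp.2
      rw [show 2 * -r / T = -(2*r)/T by ring, show -(x/T) = -x/T by ring]
      exact (div_le_div_iff_of_pos_right hT).2 (by linarith)
    · positivity
    · linarith
  have hval : ∫ r in (x/2)..x, bnd r
      = (x ^ p * (x - x/2) + (x/2) ^ (p+1) / (p+1)) * (Real.exp (-(x/T)) * x ^ (1-p)) := by
    rw [hbnd, intervalIntegral.integral_mul_const,
      intervalIntegral.integral_add intervalIntegrable_const (ii_rpow_sub hp1 x _ _),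
      intervalIntegral.integral_const, intervalIntegral.integral_comp_sub_left (fun t : ℝ => t ^ p) x,
      sub_self, integral_rpow (Or.inl hp1),
      Real.zero_rpow (by linarith : p + 1 ≠ 0), show x - x/2 = x/2 by ring, smul_eq_mul]
    ring
  rw [hval] at hub
  exact hub
lemma aux (hp1 : -1 < p) (hp0 : p < 0) (hT : 0 < T) :
    Tendsto (fun x : ℝ =>
      (x ^ p - (2/T) * ∫ r in (0:ℝ)..x, Real.exp (2 * -r / T) * (x - r) ^ p) / x ^ (p-1))
      atTop (𝓝 (T/2 * p)) := by
  have hL1 : Tendsto (fun x : ℝ => x * Real.exp (2 * -x / T)) atTop (𝓝 0) := by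
    have h := tendsto_rpow_mul_exp_neg_mul_atTop_nhds_zero 1 (2/T) (by positivity)
    refine Tendsto.congr' ?_ h
    filter_upwards [eventually_gt_atTop (0:ℝ)] with x hx
    rw [Real.rpow_one, show -(2/T) * x = 2 * -x / T by ring]
  have hsum := hL1.add (((phi1 hp1 hp0 hT).add (phi2 hp1 hp0 hT)).const_mul (2/T))
  have hlim : (0:ℝ) + (2/T) * (p*(T/2)^2 + 0) = T/2 * p := by
    field_simp; ring
  rw [hlim] at hsum
  refine Tendsto.congr' ?_ hsum
  filter_upwards [eventually_gt_atTop (0:ℝ)] with x hx0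
  have hΦ : (∫ r in (0:ℝ)..(x/2),
        Real.exp (2 * -r / T) * ((x ^ p - (x - r) ^ p) * x ^ (1 - p)))
      + (∫ r in (x/2)..x,
        Real.exp (2 * -r / T) * ((x ^ p - (x - r) ^ p) * x ^ (1 - p)))
      = ∫ r in (0:ℝ)..x, Real.exp (2 * -r / T) * ((x ^ p - (x - r) ^ p) * x ^ (1 - p)) :=
    intervalIntegral.integral_add_adjacent_intervals (ii_g hp1 T x 0 (x/2)) (ii_g hp1 T x (x/2) x)
  have hb : (∫ r in (0:ℝ)..x, Real.exp (2 * -r / T) * ((x ^ p - (x - r) ^ p) * x ^ (1 - p)))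
      = (∫ r in (0:ℝ)..x, Real.exp (2 * -r / T) * (x ^ p - (x - r) ^ p)) * x ^ (1 - p) := by
    rw [← intervalIntegral.integral_mul_const]
    simp_rw [mul_assoc]
  have hc : (∫ r in (0:ℝ)..x, Real.exp (2 * -r / T) * (x ^ p - (x - r) ^ p))
      = (∫ r in (0:ℝ)..x, Real.exp (2 * -r / T)) * x ^ p
        - ∫ r in (0:ℝ)..x, Real.exp (2 * -r / T) * (x - r) ^ p := by
    rw [← intervalIntegral.integral_mul_const]
    have hint : IntervalIntegrable (fun r : ℝ => Real.exp (2 * -r / T) * x ^ p) volume 0 x := by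
      apply Continuous.intervalIntegrable
      have : Continuous fun r : ℝ => 2 * -r / T := by continuity
      exact (Real.continuous_exp.comp this).mul continuous_const
    rw [← intervalIntegral.integral_sub hint (ii_exp_rpow hp1 T x 0 x)]
    simp_rw [mul_sub]
  have hd : (∫ r in (0:ℝ)..x, Real.exp (2 * -r / T))
      = T/2 * (1 - Real.exp (2 * -x / T)) := by
    have he : ∀ r : ℝ, Real.exp (2 * -r / T) = Real.exp (r * (-2/T)) := by
      intro r; congr 1; ring
    have hc2 : (-2/T) ≠ 0 := by
      rw [neg_div]
      exact neg_ne_zero.2 (by positivity)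
    simp_rw [he]
    rw [intervalIntegral.integral_comp_mul_right Real.exp hc2,
      integral_exp, smul_eq_mul, zero_mul, Real.exp_zero,
      show (-2/T)⁻¹ = -(T/2) by field_simp]
    ring
  have hxp1 : x ^ p = x ^ (p-1) * x := by
    conv_lhs => rw [show p = p - 1 + 1 by ring]
    exact Real.rpow_add_one hx0.ne' _
  have hx1p : x ^ (1-p) = (x ^ (p-1))⁻¹ := by
    rw [show (1:ℝ) - p = -(p-1) by ring, Real.rpow_neg hx0.le]
  have hA0 : x ^ (p-1) ≠ 0 := (Real.rpow_pos_of_pos hx0 _).ne'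
  rw [hΦ, hb, hc, hd, hx1p, hxp1]
  field_simp
  ring

theorem K_asymptotics_infinity (H T : ℝ) (hH : H ∈ Set.Ioo (0 : ℝ) (1/2)) (hT : 0 < T) :
    Tendsto (fun u : ℝ =>
        (if u ≤ 0 then
          (-u) ^ (2*H - 1) -
            (2/T) * ∫ s in u..0, Real.exp (2*s/T) * (s - u) ^ (2*H - 1)
        else 0) / (-u) ^ (2*H - 2))
      atBot (nhds (T/2 * (2*H - 1))) := by
  have hp1 : -1 < 2*H - 1 := by linarith [hH.1]
  have hp0 : 2*H - 1 < 0 := by linarith [hH.2]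
  have h := aux (p := 2*H-1) (T := T) hp1 hp0 hT
  rw [show (2*H - 1) - 1 = 2*H - 2 by ring] at h
  have h2 := h.comp tendsto_neg_atBot_atTop
  refine Tendsto.congr' ?_ h2
  filter_upwards [eventually_lt_atBot (0:ℝ)] with u hu
  simp only [Function.comp]
  rw [if_pos hu.le]
  have hint : (∫ r in (0:ℝ)..(-u), Real.exp (2 * -r / T) * (-u - r) ^ (2*H-1))
      = ∫ s in u..(0:ℝ), Real.exp (2*s/T) * (s - u) ^ (2*H-1) := by
    have hcn := intervalIntegral.integral_comp_neg (a := (0:ℝ)) (b := -u)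
      (fun s => Real.exp (2*s/T) * (s - u) ^ (2*H-1))
    simp only [neg_neg, neg_zero] at hcn
    rw [← hcn]
    apply intervalIntegral.integral_congr
    intro r _
    simp only []
    rw [show -u - r = -r - u by ring]
  rw [hint]
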